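/- Let m, q, p, n be natural numbers, H ∈ ℝ^{n×n} a symmetric positive semidefinite matrix, D ∈ ℝ^{m×m} and E ∈ ℝ^{p×p} symmetric negative definite matrices, G ∈ ℝ^{m×n}, Φ ∈ ℝ^{p×n}, and A ∈ ℝ^{q×n} of full row rank. Assume the only x ∈ ℝⁿ with Hx = 0, Gx = 0 and Φx = 0 is x = 0, and set R = H − Gᵀ D⁻¹ G − Φᵀ E⁻¹ Φ. Then the block matrix J = [[D, 0, 0, −G], [0, 0, 0, A], [0, 0, E, −Φ], [−Gᵀ, Aᵀ, −Φᵀ, H]] is invertible, and the q × q submatrix of J⁻¹ consisting of the rows and columns indexed by the second block equals −(A R⁻¹ Aᵀ)⁻¹; in particular this submatrix is negative definite. -/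

import Mathlib

open Matrix

theorem kkt_inverse_second_block
    (m q p n : ℕ)
    (H : Matrix (Fin n) (Fin n) ℝ) (hH : H.PosSemidef)
    (D : Matrix (Fin m) (Fin m) ℝ) (hD : (-D).PosDef)
    (E : Matrix (Fin p) (Fin p) ℝ) (hE : (-E).PosDef)
    (G : Matrix (Fin m) (Fin n) ℝ) (Φ : Matrix (Fin p) (Fin n) ℝ)
    (A : Matrix (Fin q) (Fin n) ℝ) (hA : A.rank = q)
    (hker : ∀ x : Fin n → ℝ,
      H.mulVec x = 0 → G.mulVec x = 0 → Φ.mulVec x = 0 → x = 0)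
    (R : Matrix (Fin n) (Fin n) ℝ)
    (hR : R = H - Gᵀ * D⁻¹ * G - Φᵀ * E⁻¹ * Φ)
    (J : Matrix ((Fin m ⊕ Fin q) ⊕ (Fin p ⊕ Fin n))
               ((Fin m ⊕ Fin q) ⊕ (Fin p ⊕ Fin n)) ℝ)
    (hJ : J = Matrix.fromBlocks
      (Matrix.fromBlocks D 0 0 0) (Matrix.fromBlocks 0 (-G) 0 A)
      (Matrix.fromBlocks 0 0 (-Gᵀ) Aᵀ) (Matrix.fromBlocks E (-Φ) (-Φᵀ) H)) :
    IsUnit J ∧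
    J⁻¹.submatrix (fun i : Fin q => Sum.inl (Sum.inr i))
        (fun j : Fin q => Sum.inl (Sum.inr j)) = -(A * R⁻¹ * Aᵀ)⁻¹ ∧
    (-(J⁻¹.submatrix (fun i : Fin q => Sum.inl (Sum.inr i))
        (fun j : Fin q => Sum.inl (Sum.inr j)))).PosDef := by
  -- basic facts about D and E
  have hDunit : IsUnit D := by simpa using hD.isUnit.neg
  have hD1 : D * D⁻¹ = 1 := mul_nonsing_inv D ((isUnit_iff_isUnit_det D).mp hDunit)
  have hDinvneg : (-(D⁻¹)).PosDef := by
    have h1 : (-D)⁻¹ = -(D⁻¹) := inv_eq_right_inv (by rw [neg_mul_neg, hD1])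
    simpa [h1] using hD.inv
  have hDh : (D⁻¹).IsHermitian := (by simpa using hD.1.neg : D.IsHermitian).inv
  have hEunit : IsUnit E := by simpa using hE.isUnit.neg
  have hE1 : E * E⁻¹ = 1 := mul_nonsing_inv E ((isUnit_iff_isUnit_det E).mp hEunit)
  have hEinvneg : (-(E⁻¹)).PosDef := by
    have h1 : (-E)⁻¹ = -(E⁻¹) := inv_eq_right_inv (by rw [neg_mul_neg, hE1])
    simpa [h1] using hE.inv
  have hEh : (E⁻¹).IsHermitian := (by simpa using hE.1.neg : E.IsHermitian).inv
  -- quadratic form decomposition helper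
  have key : ∀ (k l : ℕ) (N : Matrix (Fin k) (Fin k) ℝ) (M : Matrix (Fin k) (Fin l) ℝ)
      (x : Fin l → ℝ), x ⬝ᵥ (Mᵀ * N * M) *ᵥ x = (M *ᵥ x) ⬝ᵥ N *ᵥ (M *ᵥ x) := by
    intro k l N M x
    rw [← Matrix.mulVec_mulVec, ← Matrix.mulVec_mulVec, Matrix.dotProduct_mulVec x,
      Matrix.vecMul_transpose]
  -- R is positive definite
  have hRpd : R.PosDef := by
    have hRh : R.IsHermitian := by
      rw [hR]
      refine IsHermitian.sub (IsHermitian.sub hH.1 ?_) ?_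
      · simpa [conjTranspose_eq_transpose_of_trivial] using
          isHermitian_conjTranspose_mul_mul G hDh
      · simpa [conjTranspose_eq_transpose_of_trivial] using
          isHermitian_conjTranspose_mul_mul Φ hEh
    refine PosDef.of_dotProduct_mulVec_pos hRh (fun x hx => ?_)
    have hdecomp : x ⬝ᵥ R *ᵥ x = x ⬝ᵥ H *ᵥ x + (G *ᵥ x) ⬝ᵥ (-(D⁻¹)) *ᵥ (G *ᵥ x)
        + (Φ *ᵥ x) ⬝ᵥ (-(E⁻¹)) *ᵥ (Φ *ᵥ x) := by
      have hR2 : R = H + Gᵀ * (-(D⁻¹)) * G + Φᵀ * (-(E⁻¹)) * Φ := by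
        rw [hR]; simp [sub_eq_add_neg, Matrix.mul_neg, Matrix.neg_mul]
      rw [hR2, add_mulVec, add_mulVec, dotProduct_add, dotProduct_add, key _ _, key _ _]
    have h1 : 0 ≤ x ⬝ᵥ H *ᵥ x := by simpa using hH.dotProduct_mulVec_nonneg x
    have h2 : 0 ≤ (G *ᵥ x) ⬝ᵥ (-(D⁻¹)) *ᵥ (G *ᵥ x) := by
      simpa using hDinvneg.posSemidef.dotProduct_mulVec_nonneg (G *ᵥ x)
    have h3 : 0 ≤ (Φ *ᵥ x) ⬝ᵥ (-(E⁻¹)) *ᵥ (Φ *ᵥ x) := by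
      simpa using hEinvneg.posSemidef.dotProduct_mulVec_nonneg (Φ *ᵥ x)
    simp only [star_trivial]
    by_contra hle
    push_neg at hle
    rw [hdecomp] at hle
    have e1 : x ⬝ᵥ H *ᵥ x = 0 := le_antisymm (by linarith) h1
    have e2 : (G *ᵥ x) ⬝ᵥ (-(D⁻¹)) *ᵥ (G *ᵥ x) = 0 := le_antisymm (by linarith) h2
    have e3 : (Φ *ᵥ x) ⬝ᵥ (-(E⁻¹)) *ᵥ (Φ *ᵥ x) = 0 := le_antisymm (by linarith) h3
    have hHx : H *ᵥ x = 0 := (hH.dotProduct_mulVec_zero_iff x).mp (by simpa using e1)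
    have hGx : G *ᵥ x = 0 := by
      by_contra hne
      exact absurd e2 (ne_of_gt (by simpa using hDinvneg.dotProduct_mulVec_pos hne))
    have hPx : Φ *ᵥ x = 0 := by
      by_contra hne
      exact absurd e3 (ne_of_gt (by simpa using hEinvneg.dotProduct_mulVec_pos hne))
    exact hx (hker x hHx hGx hPx)
  have hR1 : R * R⁻¹ = 1 := mul_nonsing_inv R ((isUnit_iff_isUnit_det R).mp hRpd.isUnit)
  have hRipd : R⁻¹.PosDef := hRpd.inv
  -- S = A R⁻¹ Aᵀ is positive definite
  have hSpd : (A * R⁻¹ * Aᵀ).PosDef := by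
    have hSh : (A * R⁻¹ * Aᵀ).IsHermitian := by
      simpa [conjTranspose_eq_transpose_of_trivial] using
        (isHermitian_mul_mul_conjTranspose A hRipd.1)
    refine PosDef.of_dotProduct_mulVec_pos hSh (fun x hx => ?_)
    have hAx : Aᵀ *ᵥ x ≠ 0 := by
      have hinj : Function.Injective A.vecMul := by
        refine vecMul_injective_iff.mpr ?_
        refine linearIndependent_iff_card_eq_finrank_span.mpr ?_
        rw [Fintype.card_fin, Set.finrank, ← rank_eq_finrank_span_row, hA]
      rw [Matrix.mulVec_transpose]
      intro h
      exact hx (hinj (by simpa using h))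
    have hq : x ⬝ᵥ (A * R⁻¹ * Aᵀ) *ᵥ x = (Aᵀ *ᵥ x) ⬝ᵥ R⁻¹ *ᵥ (Aᵀ *ᵥ x) := by
      have h := key n q R⁻¹ Aᵀ x
      rwa [transpose_transpose] at h
    simp only [star_trivial, hq]
    exact by simpa using hRipd.dotProduct_mulVec_pos hAx
  have hS1 : (A * R⁻¹ * Aᵀ) * (A * R⁻¹ * Aᵀ)⁻¹ = 1 :=
    mul_nonsing_inv _ ((isUnit_iff_isUnit_det _).mp hSpd.isUnit)
  obtain ⟨W, hWdef⟩ : ∃ W', W' = (A * R⁻¹ * Aᵀ)⁻¹ := ⟨_, rfl⟩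
  rw [← hWdef] at hS1 ⊢
  have hWpd : W.PosDef := hWdef ▸ hSpd.inv
  obtain ⟨Y, hYdef⟩ : ∃ Y', Y' = R⁻¹ * Aᵀ * W := ⟨_, rfl⟩
  obtain ⟨Z, hZdef⟩ : ∃ Z', Z' = W * (A * R⁻¹) := ⟨_, rfl⟩
  obtain ⟨X, hXdef⟩ : ∃ X', X' = R⁻¹ - Y * (A * R⁻¹) := ⟨_, rfl⟩
  have i1 : A * Y = 1 := by
    rw [hYdef]; simp only [← Matrix.mul_assoc]; exact hS1
  have i6 : R * Y = Aᵀ * W := by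
    rw [hYdef]; simp only [← Matrix.mul_assoc]; rw [hR1, Matrix.one_mul]
  have i3 : A * X = 0 := by
    rw [hXdef, Matrix.mul_sub, ← Matrix.mul_assoc, i1, Matrix.one_mul, sub_self]
  have i5 : R * X + Aᵀ * Z = 1 := by
    rw [hXdef, hZdef, Matrix.mul_sub, hR1, ← Matrix.mul_assoc R Y, i6,
      ← Matrix.mul_assoc Aᵀ W, sub_add_cancel]
  obtain ⟨K, hKdef⟩ : ∃ K', K' = Matrix.fromBlocks
      (Matrix.fromBlocks (D⁻¹ + D⁻¹ * G * X * Gᵀ * D⁻¹) (D⁻¹ * G * Y)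
        (Z * Gᵀ * D⁻¹) (-W))
      (Matrix.fromBlocks (D⁻¹ * G * X * Φᵀ * E⁻¹) (D⁻¹ * G * X)
        (Z * Φᵀ * E⁻¹) Z)
      (Matrix.fromBlocks (E⁻¹ * Φ * X * Gᵀ * D⁻¹) (E⁻¹ * Φ * Y)
        (X * Gᵀ * D⁻¹) Y)
      (Matrix.fromBlocks (E⁻¹ + E⁻¹ * Φ * X * Φᵀ * E⁻¹) (E⁻¹ * Φ * X)
        (X * Φᵀ * E⁻¹) X) := ⟨_, rfl⟩
  have hJK : J * K = 1 := by
    rw [hJ, hKdef]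
    have hone : (1 : Matrix ((Fin m ⊕ Fin q) ⊕ (Fin p ⊕ Fin n))
        ((Fin m ⊕ Fin q) ⊕ (Fin p ⊕ Fin n)) ℝ) =
        Matrix.fromBlocks (Matrix.fromBlocks 1 0 0 1) (Matrix.fromBlocks 0 0 0 0)
          (Matrix.fromBlocks 0 0 0 0) (Matrix.fromBlocks 1 0 0 1) := by
      rw [fromBlocks_zero, fromBlocks_zero, fromBlocks_one, fromBlocks_one, fromBlocks_one]
    rw [hone]
    simp only [fromBlocks_multiply, fromBlocks_add]
    have hH' : H = R + Gᵀ * D⁻¹ * G + Φᵀ * E⁻¹ * Φ := by rw [hR]; abel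
    have hRX : R * X = 1 - Aᵀ * Z := by rw [← i5]; abel
    refine fromBlocks_inj.mpr ⟨?_, ?_, ?_, ?_⟩ <;>
      refine fromBlocks_inj.mpr ⟨?_, ?_, ?_, ?_⟩ <;>
      · simp only [hH', hD1, hE1, hRX, i6, i3, i1, Matrix.mul_add, Matrix.add_mul,
          Matrix.sub_mul, Matrix.mul_sub, Matrix.neg_mul, Matrix.mul_neg, Matrix.zero_mul,
          Matrix.mul_zero, zero_add, add_zero, Matrix.one_mul, Matrix.mul_one,
          ← Matrix.mul_assoc]
        try abel
  have hJinv : J⁻¹ = K := inv_eq_right_inv hJK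
  have hsub : J⁻¹.submatrix (fun i : Fin q => Sum.inl (Sum.inr i))
      (fun j : Fin q => Sum.inl (Sum.inr j)) = -W := by
    rw [hJinv, hKdef]
    ext i j
    simp [Matrix.submatrix_apply, Matrix.fromBlocks_apply₁₁, Matrix.fromBlocks_apply₂₂]
  refine ⟨IsUnit.of_mul_eq_one K hJK, hsub, ?_⟩
  rw [hsub, neg_neg]
  exact hWpd
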